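/- Let c be a nonzero real number and set R_c := {(c⁻¹ b_k)_k : (b_k) ∈ R}. If F : ℝⁿ × X → Y is (compactly) (R,𝓑)-multi-almost automorphic, then the function (t; x) ↦ F(c·t; x) is (compactly) (R_c,𝓑)-multi-almost automorphic. -/

import Mathlib

open Filter Topology MeasureTheory

noncomputable section

/-- `F : ℝⁿ × X → Y` is `(R, 𝓑)`-multi-almost automorphic. -/
def MultiAA {n : ℕ} {X Y : Type*} [NormedAddCommGroup X] [NormedAddCommGroup Y]
    (R : Set (ℕ → EuclideanSpace ℝ (Fin n))) (𝓑 : Set (Set X))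
    (F : EuclideanSpace ℝ (Fin n) → X → Y) : Prop :=
  Continuous (fun p : EuclideanSpace ℝ (Fin n) × X => F p.1 p.2) ∧
  ∀ B ∈ 𝓑, ∀ b ∈ R, ∃ k : ℕ → ℕ, StrictMono k ∧
    ∃ Fs : EuclideanSpace ℝ (Fin n) → X → Y,
      (∀ x ∈ B, ∀ t, Tendsto (fun l => F (t + b (k l)) x) atTop (𝓝 (Fs t x))) ∧
      (∀ x ∈ B, ∀ t, Tendsto (fun l => Fs (t - b (k l)) x) atTop (𝓝 (F t x)))

/-- `F : ℝⁿ × X → Y` is compactly `(R, 𝓑)`-multi-almost automorphic: the two limits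
converge uniformly in `t` on compact subsets of `ℝⁿ`, for each `x ∈ B`. -/
def CompactMultiAA {n : ℕ} {X Y : Type*} [NormedAddCommGroup X] [NormedAddCommGroup Y]
    (R : Set (ℕ → EuclideanSpace ℝ (Fin n))) (𝓑 : Set (Set X))
    (F : EuclideanSpace ℝ (Fin n) → X → Y) : Prop :=
  Continuous (fun p : EuclideanSpace ℝ (Fin n) × X => F p.1 p.2) ∧
  ∀ B ∈ 𝓑, ∀ b ∈ R, ∃ k : ℕ → ℕ, StrictMono k ∧
    ∃ Fs : EuclideanSpace ℝ (Fin n) → X → Y,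
      (∀ x ∈ B, ∀ K : Set (EuclideanSpace ℝ (Fin n)), IsCompact K →
        TendstoUniformlyOn (fun l t => F (t + b (k l)) x) (fun t => Fs t x) atTop K) ∧
      (∀ x ∈ B, ∀ K : Set (EuclideanSpace ℝ (Fin n)), IsCompact K →
        TendstoUniformlyOn (fun l t => Fs (t - b (k l)) x) (fun t => F t x) atTop K)

/-- if `F` is (compactly) `(R,𝓑)`-multi-almost automorphic and `c ≠ 0`, then
`(t; x) ↦ F(c·t; x)` is (compactly) `(R_c,𝓑)`-multi-almost automorphic, where
`R_c = {(c⁻¹ b_k)_k : (b_k) ∈ R}`. -/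
theorem multiAA_scale {n : ℕ} {X Y : Type*}
    [NormedAddCommGroup X] [NormedSpace ℝ X] [CompleteSpace X]
    [NormedAddCommGroup Y] [NormedSpace ℝ Y] [CompleteSpace Y]
    (R : Set (ℕ → EuclideanSpace ℝ (Fin n))) (𝓑 : Set (Set X))
    (hR : R.Nonempty) (h𝓑 : 𝓑.Nonempty)
    (F : EuclideanSpace ℝ (Fin n) → X → Y) (c : ℝ) (hc : c ≠ 0) :
    (MultiAA R 𝓑 F →
      MultiAA {b' | ∃ b ∈ R, b' = fun k => c⁻¹ • b k} 𝓑 (fun t x => F (c • t) x)) ∧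
    (CompactMultiAA R 𝓑 F →
      CompactMultiAA {b' | ∃ b ∈ R, b' = fun k => c⁻¹ • b k} 𝓑 (fun t x => F (c • t) x)) := by

  have key : ∀ t : EuclideanSpace ℝ (Fin n), ∀ v : EuclideanSpace ℝ (Fin n),
      c • (t + c⁻¹ • v) = c • t + v := by
    intro t v
    rw [smul_add, smul_smul, mul_inv_cancel₀ hc, one_smul]
  have key2 : ∀ t : EuclideanSpace ℝ (Fin n), ∀ v : EuclideanSpace ℝ (Fin n),
      c • (t - c⁻¹ • v) = c • t - v := by
    intro t v
    rw [smul_sub, smul_smul, mul_inv_cancel₀ hc, one_smul]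
  constructor
  · rintro ⟨hcont, hF⟩
    refine ⟨?_, ?_⟩
    · exact hcont.comp ((continuous_fst.const_smul c).prodMk continuous_snd)
    · rintro B hB b' ⟨b, hbR, rfl⟩
      obtain ⟨k, hk, Fs, h1, h2⟩ := hF B hB b hbR
      refine ⟨k, hk, fun t x => Fs (c • t) x, ?_, ?_⟩
      · intro x hx t
        simpa [key] using h1 x hx (c • t)
      · intro x hx t
        simpa [key2] using h2 x hx (c • t)
  · rintro ⟨hcont, hF⟩
    refine ⟨?_, ?_⟩
    · exact hcont.comp ((continuous_fst.const_smul c).prodMk continuous_snd)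
    · rintro B hB b' ⟨b, hbR, rfl⟩
      obtain ⟨k, hk, Fs, h1, h2⟩ := hF B hB b hbR
      refine ⟨k, hk, fun t x => Fs (c • t) x, ?_, ?_⟩
      · intro x hx K hK
        have hK' : IsCompact ((fun t : EuclideanSpace ℝ (Fin n) => c • t) '' K) :=
          hK.image (by fun_prop)
        have := (h1 x hx _ hK').comp (fun t : EuclideanSpace ℝ (Fin n) => c • t)
        have h := this.mono (Set.subset_preimage_image _ _)
        simpa [Function.comp_def, key] using h
      · intro x hx K hK
        have hK' : IsCompact ((fun t : EuclideanSpace ℝ (Fin n) => c • t) '' K) :=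
          hK.image (by fun_prop)
        have := (h2 x hx _ hK').comp (fun t : EuclideanSpace ℝ (Fin n) => c • t)
        have h := this.mono (Set.subset_preimage_image _ _)
        simpa [Function.comp_def, key2] using h
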